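/- Let F be a set functor that is ζ-bounded and preserves monomorphisms, and let Λ be a relational connector of F. If Λ-similarity is sound, then Λ is normal, i.e. Λ1_X = 1_{FX} for every set X. -/

import Mathlib

open CategoryTheory Function

universe u

/-- Applicative composition of relations: `relComp s r = s · r`. -/
def relComp {X Y Z : Type u} (s : Y → Z → Prop) (r : X → Y → Prop) : X → Z → Prop :=
  fun x z => ∃ y, r x y ∧ s y z

/-- Converse of a relation. -/
def relConv {X Y : Type u} (r : X → Y → Prop) : Y → X → Prop := fun y x => r x y

/-- Graph relation of a function. -/
def fgraph {X Y : Type u} (f : X → Y) : X → Y → Prop := fun x y => f x = y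

/-- An `F`-relator: a monotone assignment of relations `F X ⇸ F Y` to relations `X ⇸ Y`. -/
structure Relator (F : Type u ⥤ Type u) : Type (u + 1) where
  map : ∀ {X Y : Type u}, (X → Y → Prop) → (F.obj X → F.obj Y → Prop)
  mono : ∀ {X Y : Type u} {r s : X → Y → Prop}, (∀ x y, r x y → s x y) →
    ∀ u v, map r u v → map s u v

/-- `f` is a coalgebra homomorphism from `(X, α)` to `(Y, β)`. -/
def IsCoalgHom (F : Type u ⥤ Type u) {X Y : Type u} (α : X → F.obj X) (β : Y → F.obj Y)
    (f : X → Y) : Prop :=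
  ∀ x, β (f x) = F.map (TypeCat.ofHom f) (α x)

/-- Behavioural equivalence of states. -/
def BehEq (F : Type u ⥤ Type u) {X Y : Type u} (α : X → F.obj X) (β : Y → F.obj Y)
    (x : X) (y : Y) : Prop :=
  ∃ (Z : Type u) (γ : Z → F.obj Z) (f : X → Z) (g : Y → Z),
    IsCoalgHom F α γ f ∧ IsCoalgHom F β γ g ∧ f x = g y

/-- `r` is a `Λ`-simulation from `(X, α)` to `(Y, β)`: `r ≤ β° · Λr · α`. -/
def IsSimulation {F : Type u ⥤ Type u} (Λ : Relator F) {X Y : Type u}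
    (α : X → F.obj X) (β : Y → F.obj Y) (r : X → Y → Prop) : Prop :=
  ∀ x y, r x y → Λ.map r (α x) (β y)

/-- `x` and `y` are `Λ`-similar: related by some `Λ`-simulation. -/
def LSimilar {F : Type u ⥤ Type u} (Λ : Relator F) {X Y : Type u}
    (α : X → F.obj X) (β : Y → F.obj Y) (x : X) (y : Y) : Prop :=
  ∃ r, IsSimulation Λ α β r ∧ r x y

/-- `Λ` is a relational connector: `1_{FX} ≤ Λ1_X` and `Λ(g° · r · f) = (Fg)° · Λr · Ff`. -/
def IsRelConnector (F : Type u ⥤ Type u) (Λ : Relator F) : Prop :=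
  (∀ (X : Type u) (u : F.obj X), Λ.map (@Eq X) u u) ∧
  (∀ {X Y A B : Type u} (r : X → Y → Prop) (f : A → X) (g : B → Y)
    (u : F.obj A) (v : F.obj B),
    Λ.map (fun a b => r (f a) (g b)) u v ↔ Λ.map r (F.map (TypeCat.ofHom f) u) (F.map (TypeCat.ofHom g) v))

/-- `Λ` is normal: `Λ1_X = 1_{FX}` for every set `X`. -/
def IsNormal (F : Type u ⥤ Type u) (Λ : Relator F) : Prop :=
  ∀ (X : Type u) (u v : F.obj X), Λ.map (@Eq X) u v ↔ u = v

/-- `(Z, γ)` is a terminal `F`-coalgebra. -/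
def IsTerminalCoalg (F : Type u ⥤ Type u) {Z : Type u} (γ : Z → F.obj Z) : Prop :=
  ∀ (X : Type u) (α : X → F.obj X), ∃! f : X → Z, IsCoalgHom F α γ f

/-- `F` is ζ-bounded: it admits a terminal coalgebra `(Z, γ)` and for every set `X`
and all `u, v ∈ FX` there are a set `A` of cardinality at most `|Z|` and an
injection `i : A → X` with `u, v` in the image of `Fi`. -/
def ZetaBounded (F : Type u ⥤ Type u) : Prop :=
  ∃ (Z : Type u) (γ : Z → F.obj Z), IsTerminalCoalg F γ ∧
    ∀ (X : Type u) (u v : F.obj X),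
      ∃ (A : Type u) (i : A → X), Function.Injective i ∧
        (∃ e : A → Z, Function.Injective e) ∧
        (∃ u' : F.obj A, F.map (TypeCat.ofHom i) u' = u) ∧ (∃ v' : F.obj A, F.map (TypeCat.ofHom i) v' = v)

/-- `Λ`-similarity is sound: `Λ`-similar states are behaviourally equivalent. -/
def Sound (F : Type u ⥤ Type u) (Λ : Relator F) : Prop :=
  ∀ {X Y : Type u} (α : X → F.obj X) (β : Y → F.obj Y) (x : X) (y : Y),
    LSimilar Λ α β x y → BehEq F α β x y

/-- Let `F` be ζ-bounded and preserve monomorphisms, and let `Λ`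
be a relational connector of `F`. If `Λ`-similarity is sound, then `Λ` is normal. -/
theorem stmt19 (F : Type u ⥤ Type u) (hzeta : ZetaBounded F)
    (hmono : ∀ {X Y : Type u} (f : X → Y),
      Function.Injective f → Function.Injective (F.map (TypeCat.ofHom f)))
    (Λ : Relator F) (hconn : IsRelConnector F Λ) (hsound : Sound F Λ) :
    IsNormal F Λ := by
  intro X u v
  constructor
  · intro h
    obtain ⟨Z, γ, hterm, hbd⟩ := hzeta
    obtain ⟨A, i, hi, ⟨e, he⟩, ⟨u', hu⟩, ⟨v', hv⟩⟩ := hbd X u v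
    have h' : Λ.map (@Eq A) u' v' := by
      have h2 := (hconn.2 (@Eq X) i i u' v').2 (by rw [hu, hv]; exact h)
      exact Λ.mono (fun a b hab => hi hab) _ _ h2
    -- build a coalgebra on C := Z ⊕ Bool with two extra states pointing at u' and v'
    let C := Sum Z (ULift.{u} Bool)
    let α : C → F.obj C := fun c => match c with
      | Sum.inl z => F.map (TypeCat.ofHom Sum.inl) (γ z)
      | Sum.inr b => F.map (TypeCat.ofHom (Sum.inl ∘ e)) (if b.down then u' else v')
    let r : C → C → Prop := fun x y =>
      x = y ∨ (x = Sum.inr ⟨true⟩ ∧ y = Sum.inr ⟨false⟩)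
    have hsim : IsSimulation Λ α α r := by
      intro x y hxy
      rcases hxy with rfl | ⟨rfl, rfl⟩
      · exact Λ.mono (fun a b hab => Or.inl hab) _ _ (hconn.1 _ (α x))
      · show Λ.map r (F.map (TypeCat.ofHom (Sum.inl ∘ e)) u') (F.map (TypeCat.ofHom (Sum.inl ∘ e)) v')
        exact (hconn.2 r (Sum.inl ∘ e) (Sum.inl ∘ e) u' v').1
          (Λ.mono (fun a b hab => Or.inl (by rw [hab])) _ _ h')
    have hbeh : BehEq F α α (Sum.inr ⟨true⟩) (Sum.inr ⟨false⟩) :=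
      hsound α α _ _ ⟨r, hsim, Or.inr ⟨rfl, rfl⟩⟩
    obtain ⟨W, δ, f, g, hf, hg, hfg⟩ := hbeh
    obtain ⟨t, ht, htu⟩ := hterm C α
    obtain ⟨hW, hWhom, _⟩ := hterm W δ
    have hcomp : ∀ (f : C → W), IsCoalgHom F α δ f → IsCoalgHom F α γ (hW ∘ f) := by
      intro f hf c
      have : γ (hW (f c)) = F.map (TypeCat.ofHom hW) (δ (f c)) := hWhom (f c)
      rw [Function.comp_apply, this, hf c]
      exact (FunctorToTypes.map_comp_apply F (TypeCat.ofHom f) (TypeCat.ofHom hW) (α c)).symm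
    have heqf : hW ∘ f = t := htu _ (hcomp f hf)
    have heqg : hW ∘ g = t := htu _ (hcomp g hg)
    have hteq : t (Sum.inr ⟨true⟩) = t (Sum.inr ⟨false⟩) :=
      (congrFun heqf _).symm.trans ((congrArg hW hfg).trans (congrFun heqg _))
    -- t ∘ inl is the identity on Z
    obtain ⟨s, hs, hsu⟩ := hterm Z γ
    have hidhom : IsCoalgHom F γ γ id := by
      intro z
      exact (FunctorToTypes.map_id_apply F (γ z)).symm
    have htinl : IsCoalgHom F γ γ (t ∘ Sum.inl) := by
      intro z
      have : γ (t (Sum.inl z)) = F.map (TypeCat.ofHom t) (α (Sum.inl z)) := ht (Sum.inl z)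
      rw [Function.comp_apply, this]
      show F.map (TypeCat.ofHom t) (F.map (TypeCat.ofHom Sum.inl) (γ z)) = _
      exact (FunctorToTypes.map_comp_apply F (TypeCat.ofHom Sum.inl) (TypeCat.ofHom t) (γ z)).symm
    have hid : (t ∘ Sum.inl) = id := (hsu _ htinl).trans (hsu _ hidhom).symm
    -- compute γ at the two merged states
    have hcu : γ (t (Sum.inr ⟨true⟩)) = F.map (TypeCat.ofHom e) u' := by
      have h1 : γ (t (Sum.inr ⟨true⟩)) = F.map (TypeCat.ofHom t) (F.map (TypeCat.ofHom (Sum.inl ∘ e)) u') :=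
        ht (Sum.inr ⟨true⟩)
      rw [h1, ← FunctorToTypes.map_comp_apply]
      show F.map (TypeCat.ofHom (t ∘ (Sum.inl ∘ e))) u' = F.map (TypeCat.ofHom e) u'
      have hfun : t ∘ (Sum.inl ∘ e) = e := by
        funext a; exact congrFun hid (e a)
      rw [hfun]
    have hcv : γ (t (Sum.inr ⟨false⟩)) = F.map (TypeCat.ofHom e) v' := by
      have h1 : γ (t (Sum.inr ⟨false⟩)) = F.map (TypeCat.ofHom t) (F.map (TypeCat.ofHom (Sum.inl ∘ e)) v') :=
        ht (Sum.inr ⟨false⟩)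
      rw [h1, ← FunctorToTypes.map_comp_apply]
      show F.map (TypeCat.ofHom (t ∘ (Sum.inl ∘ e))) v' = F.map (TypeCat.ofHom e) v'
      have hfun : t ∘ (Sum.inl ∘ e) = e := by
        funext a; exact congrFun hid (e a)
      rw [hfun]
    have : F.map (TypeCat.ofHom e) u' = F.map (TypeCat.ofHom e) v' := by rw [← hcu, ← hcv, hteq]
    have : u' = v' := hmono e he this
    rw [← hu, ← hv, this]
  · rintro rfl
    exact hconn.1 X u
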